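/- Let X be a positive-integer valued random variable with P(X ≥ n) > 0 for all n, and suppose that for all large n, e^{-ζ} ≤ P(X ≥ n+1)/P(X ≥ n) ≤ e^{-ξ} where 0 < ξ ≤ ζ < ∞. Let u_n satisfy P(X ≥ u_n) = a_n/(2n+1)^d with a_n bounded, liminf a_n ≥ e^{-ζ}, a_n ≤ 1. Then for every fixed integer x ≥ 0: liminf_n (2n+1)^d · P(X ≥ u_n + x) ≥ e^{-ζ(x+1)} and limsup_n (2n+1)^d · P(X ≥ u_n + x) ≤ e^{-ξ x}. -/

import Mathlib

open MeasureTheory Filter Topology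

theorem stmt_5 {Ω : Type*} [MeasurableSpace Ω] (μ : Measure Ω) [IsProbabilityMeasure μ]
    (X : Ω → ℕ) (hX : Measurable X) (hX1 : ∀ ω, 1 ≤ X ω)
    (hpos : ∀ n : ℕ, 0 < (μ {ω | n ≤ X ω}).toReal)
    (ζ ξ : ℝ) (hξ : 0 < ξ) (hξζ : ξ ≤ ζ)
    (hratio : ∀ᶠ n : ℕ in atTop,
      Real.exp (-ζ) ≤ (μ {ω | n + 1 ≤ X ω}).toReal / (μ {ω | n ≤ X ω}).toReal ∧
      (μ {ω | n + 1 ≤ X ω}).toReal / (μ {ω | n ≤ X ω}).toReal ≤ Real.exp (-ξ))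
    (d : ℕ) (hd : 1 ≤ d)
    (u : ℕ → ℕ) (a : ℕ → ℝ)
    (ha1 : ∀ n, a n ≤ 1)
    (ha2 : Real.exp (-ζ) ≤ liminf a atTop)
    (hu : ∀ n : ℕ, (μ {ω | u n ≤ X ω}).toReal = a n / (2 * n + 1 : ℝ) ^ d) :
    ∀ x : ℕ,
      Real.exp (-ζ * (x + 1)) ≤
        liminf (fun n : ℕ =>
          ((2 * n + 1 : ℝ) ^ d) * (μ {ω | u n + x ≤ X ω}).toReal) atTop ∧
      limsup (fun n : ℕ =>
          ((2 * n + 1 : ℝ) ^ d) * (μ {ω | u n + x ≤ X ω}).toReal) atTop ≤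
        Real.exp (-ξ * x) := by
  intro x
  set p : ℕ → ℝ := fun k => (μ {ω | k ≤ X ω}).toReal with hp
  -- p is antitone
  have hanti : ∀ j k : ℕ, j ≤ k → p k ≤ p j := by
    intro j k hjk
    apply ENNReal.toReal_mono (measure_ne_top μ _)
    exact measure_mono (fun ω hω => le_trans hjk hω)
  obtain ⟨N, hN⟩ := eventually_atTop.1 hratio
  -- step bounds
  have hstep : ∀ m, N ≤ m → Real.exp (-ζ) * p m ≤ p (m + 1) ∧ p (m + 1) ≤ Real.exp (-ξ) * p m := by
    intro m hm
    obtain ⟨h1, h2⟩ := hN m hm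
    have hpm := hpos m
    constructor
    · have := (le_div_iff₀ hpm).1 h1
      linarith
    · have := (div_le_iff₀ hpm).1 h2
      linarith
  -- iterated bounds
  have hiter : ∀ m, N ≤ m →
      Real.exp (-ζ * x) * p m ≤ p (m + x) ∧ p (m + x) ≤ Real.exp (-ξ * x) * p m := by
    intro m hm
    induction x with
    | zero => simp
    | succ y ih =>
      obtain ⟨ih1, ih2⟩ := ih
      have hmy : N ≤ m + y := le_trans hm (Nat.le_add_right m y)
      obtain ⟨s1, s2⟩ := hstep (m + y) hmy
      have e1 : Real.exp (-ζ * (y + 1 : ℕ)) = Real.exp (-ζ) * Real.exp (-ζ * y) := by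
        rw [← Real.exp_add]; push_cast; ring_nf
      have e2 : Real.exp (-ξ * (y + 1 : ℕ)) = Real.exp (-ξ) * Real.exp (-ξ * y) := by
        rw [← Real.exp_add]; push_cast; ring_nf
      constructor
      · have : m + (y + 1) = (m + y) + 1 := by ring
        rw [this, e1]
        calc Real.exp (-ζ) * Real.exp (-ζ * y) * p m
            = Real.exp (-ζ) * (Real.exp (-ζ * y) * p m) := by ring
          _ ≤ Real.exp (-ζ) * p (m + y) := by
              exact mul_le_mul_of_nonneg_left ih1 (Real.exp_pos _).le
          _ ≤ p (m + y + 1) := s1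
      · have : m + (y + 1) = (m + y) + 1 := by ring
        rw [this, e2]
        calc p (m + y + 1) ≤ Real.exp (-ξ) * p (m + y) := s2
          _ ≤ Real.exp (-ξ) * (Real.exp (-ξ * y) * p m) := by
              exact mul_le_mul_of_nonneg_left ih2 (Real.exp_pos _).le
          _ = Real.exp (-ξ) * Real.exp (-ξ * y) * p m := by ring
  -- positivity of (2n+1)^d
  have hpow : ∀ n : ℕ, (0 : ℝ) < (2 * n + 1 : ℝ) ^ d := by
    intro n; positivity
  -- a n ≥ 0
  have ha0 : ∀ n, 0 ≤ a n := by
    intro n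
    have h := hpos (u n)
    rw [hu n] at h
    have h3 := mul_pos h (hpow n)
    rw [div_mul_cancel₀ _ (hpow n).ne'] at h3
    exact h3.le
  -- eventually u n ≥ N
  have huN : ∀ᶠ n : ℕ in atTop, N ≤ u n := by
    have hbase : Tendsto (fun n : ℕ => (2 * n + 1 : ℝ) ^ d) atTop atTop := by
      apply tendsto_atTop_mono (f := fun n : ℕ => (n : ℝ))
      · intro n
        calc (n : ℝ) ≤ 2 * n + 1 := by push_cast; linarith [Nat.cast_nonneg (α := ℝ) n]
          _ ≤ (2 * n + 1 : ℝ) ^ d := le_self_pow₀ (by linarith [Nat.cast_nonneg (α := ℝ) n]) (by omega)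
      · exact tendsto_natCast_atTop_atTop
    have htend : Tendsto (fun n : ℕ => 1 / (2 * n + 1 : ℝ) ^ d) atTop (𝓝 0) := by
      simp only [one_div]; exact hbase.inv_tendsto_atTop
    have hev : ∀ᶠ n : ℕ in atTop, 1 / (2 * n + 1 : ℝ) ^ d < p N := by
      have := htend.eventually (eventually_lt_nhds (hpos N))
      exact this
    filter_upwards [hev] with n hn
    by_contra hcon
    push_neg at hcon
    have h1 : p N ≤ p (u n) := hanti (u n) N hcon.le
    have h2 : p (u n) = a n / (2 * n + 1 : ℝ) ^ d := hu n
    have h3 : a n / (2 * n + 1 : ℝ) ^ d ≤ 1 / (2 * n + 1 : ℝ) ^ d :=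
      div_le_div_of_nonneg_right (ha1 n) (hpow n).le
    linarith [h2 ▸ h1]
  -- key eventual bounds
  have hkey : ∀ᶠ n : ℕ in atTop,
      a n * Real.exp (-ζ * x) ≤ ((2 * n + 1 : ℝ) ^ d) * p (u n + x) ∧
      ((2 * n + 1 : ℝ) ^ d) * p (u n + x) ≤ a n * Real.exp (-ξ * x) := by
    filter_upwards [huN] with n hn
    obtain ⟨l1, l2⟩ := hiter (u n) hn
    have hpn : ((2 * n + 1 : ℝ) ^ d) * p (u n) = a n := by
      have : p (u n) = a n / (2 * n + 1 : ℝ) ^ d := hu n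
      rw [this]; field_simp
    constructor
    · calc a n * Real.exp (-ζ * x) = Real.exp (-ζ * x) * (((2 * n + 1 : ℝ) ^ d) * p (u n)) := by
            rw [hpn]; ring
        _ = ((2 * n + 1 : ℝ) ^ d) * (Real.exp (-ζ * x) * p (u n)) := by ring
        _ ≤ ((2 * n + 1 : ℝ) ^ d) * p (u n + x) :=
            mul_le_mul_of_nonneg_left l1 (hpow n).le
    · calc ((2 * n + 1 : ℝ) ^ d) * p (u n + x)
          ≤ ((2 * n + 1 : ℝ) ^ d) * (Real.exp (-ξ * x) * p (u n)) :=
            mul_le_mul_of_nonneg_left l2 (hpow n).le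
        _ = Real.exp (-ξ * x) * (((2 * n + 1 : ℝ) ^ d) * p (u n)) := by ring
        _ = a n * Real.exp (-ξ * x) := by rw [hpn]; ring
  set f : ℕ → ℝ := fun n => ((2 * n + 1 : ℝ) ^ d) * p (u n + x) with hf
  have hf0 : ∀ n, 0 ≤ f n := fun n =>
    mul_nonneg (hpow n).le ENNReal.toReal_nonneg
  constructor
  · -- liminf bound
    apply le_of_forall_lt
    intro y hy
    set y' := (y + Real.exp (-ζ * (x + 1))) / 2 with hy'
    have hyy' : y < y' := by rw [hy']; linarith
    have hy'lt : y' < Real.exp (-ζ * (x + 1)) := by rw [hy']; linarith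
    set c := Real.exp (-ζ * x) with hc
    have hc0 : 0 < c := Real.exp_pos _
    have hyc : y' / c < Real.exp (-ζ) := by
      rw [div_lt_iff₀ hc0]
      calc y' < Real.exp (-ζ * (x + 1)) := hy'lt
        _ = Real.exp (-ζ) * c := by rw [hc, ← Real.exp_add]; ring_nf
    have hb : y' / c < liminf a atTop := lt_of_lt_of_le hyc ha2
    have hev : ∀ᶠ n in atTop, y' / c < a n :=
      eventually_lt_of_lt_liminf hb ⟨0, eventually_map.2 (Eventually.of_forall ha0)⟩
    have this : ∀ᶠ n in atTop, y' ≤ f n := by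
      filter_upwards [hev, hkey] with n h1 ⟨h2, _⟩
      calc y' = (y' / c) * c := by field_simp
        _ ≤ a n * c := mul_le_mul_of_nonneg_right h1.le hc0.le
        _ ≤ f n := h2
    have hcob : IsCoboundedUnder (· ≥ ·) atTop f := by
      apply isCoboundedUnder_ge_of_eventually_le atTop (x := Real.exp (-ξ * x))
      filter_upwards [hkey] with n ⟨_, h2⟩
      calc f n ≤ a n * Real.exp (-ξ * x) := h2
        _ ≤ 1 * Real.exp (-ξ * x) := mul_le_mul_of_nonneg_right (ha1 n) (Real.exp_pos _).le
        _ = Real.exp (-ξ * x) := one_mul _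
    exact lt_of_lt_of_le hyy' (le_liminf_of_le hcob this)
  · -- limsup bound
    have hev : ∀ᶠ n in atTop, f n ≤ Real.exp (-ξ * x) := by
      filter_upwards [hkey] with n ⟨_, h2⟩
      calc f n ≤ a n * Real.exp (-ξ * x) := h2
        _ ≤ 1 * Real.exp (-ξ * x) :=
            mul_le_mul_of_nonneg_right (ha1 n) (Real.exp_pos _).le
        _ = Real.exp (-ξ * x) := one_mul _
    exact limsup_le_of_le (isCoboundedUnder_le_of_le _ hf0) hev
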